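/- (Invariance of Δ_Z under controlled unitaries) Let U = ∑_c |c⟩⟨c| ⊗ U_c be a controlled unitary on ℂ^{d_A} ⊗ ℂ^{d_B}, where each U_c ∈ M_{d_B}(ℂ) is unitary and the sum is over the computational basis Z of ℂ^{d_A}. Then for every density matrix ρ on ℂ^{d_A} ⊗ ℂ^{d_B}, Δ_Z(U ρ U†) = Δ_Z(ρ). -/

import Mathlib

open scoped Classical ComplexOrder
open Matrix Kronecker BigOperators

noncomputable section

/-- The von Neumann entropy (in bits) of a matrix: `-∑ᵢ λᵢ log₂ λᵢ` over its eigenvalues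
(with the convention `0 · log₂ 0 = 0`); junk value `0` if the matrix is not Hermitian. -/
noncomputable def vnEntropy {n : Type*} [Fintype n] [DecidableEq n]
    (ρ : Matrix n n ℂ) : ℝ :=
  if h : ρ.IsHermitian then -∑ i, h.eigenvalues i * Real.logb 2 (h.eigenvalues i) else 0

/-- A density matrix: positive semidefinite with unit trace. -/
def IsDensity {n : Type*} [Fintype n] (ρ : Matrix n n ℂ) : Prop :=
  ρ.PosSemidef ∧ ρ.trace = 1

/-- The dephasing (pinching) map on subsystem `A` with respect to the computational basis:
`Δ(ρ) = ∑ c (|c⟩⟨c| ⊗ I_B) ρ (|c⟩⟨c| ⊗ I_B)`. -/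
noncomputable def dephA {A B : Type*} [Fintype A] [DecidableEq A] [Fintype B] [DecidableEq B]
    (ρ : Matrix (A × B) (A × B) ℂ) : Matrix (A × B) (A × B) ℂ :=
  ∑ c : A, (Matrix.single c c (1 : ℂ) ⊗ₖ (1 : Matrix B B ℂ)) * ρ *
    (Matrix.single c c (1 : ℂ) ⊗ₖ (1 : Matrix B B ℂ))

/-- The monotone `Δ_Z(ρ) = S(Δ(ρ)) − S(ρ)`. -/
noncomputable def DeltaZ {A B : Type*} [Fintype A] [DecidableEq A] [Fintype B] [DecidableEq B]
    (ρ : Matrix (A × B) (A × B) ℂ) : ℝ :=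
  vnEntropy (dephA ρ) - vnEntropy ρ

/-! ### Auxiliary lemmas -/

open Polynomial in
/-- The characteristic polynomial is invariant under unitary conjugation. -/
lemma charpoly_unitary_conj' {n : Type*} [Fintype n] [DecidableEq n]
    (V M : Matrix n n ℂ) (h1 : V * Vᴴ = 1) (h2 : Vᴴ * V = 1) :
    (V * M * Vᴴ).charpoly = M.charpoly := by
  have key : charmatrix (V * M * Vᴴ) =
      (C : ℂ →+* ℂ[X]).mapMatrix V * charmatrix M * (C : ℂ →+* ℂ[X]).mapMatrix Vᴴ := by
    rw [charmatrix, charmatrix, Matrix.mul_sub, Matrix.sub_mul]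
    congr 1
    · have hc := (Matrix.scalar_commute (n := n) (X : ℂ[X])
        (fun r' => Commute.all _ _) ((C : ℂ →+* ℂ[X]).mapMatrix V)).eq
      rw [show ((C : ℂ →+* ℂ[X]).mapMatrix V) * Matrix.scalar n (X : ℂ[X])
          = Matrix.scalar n (X : ℂ[X]) * ((C : ℂ →+* ℂ[X]).mapMatrix V) from hc.symm,
        Matrix.mul_assoc, ← RingHom.map_mul, h1]
      simp
    · rw [← RingHom.map_mul, ← RingHom.map_mul]
  rw [Matrix.charpoly, Matrix.charpoly, key, det_mul, det_mul, mul_comm, ← mul_assoc,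
    ← det_mul, ← RingHom.map_mul, h2]
  simp

open Polynomial in
/-- The characteristic polynomial of a Hermitian matrix factors through its eigenvalues. -/
lemma charpoly_hermitian' {n : Type*} [Fintype n] [DecidableEq n]
    (A : Matrix n n ℂ) (hA : A.IsHermitian) :
    A.charpoly = ∏ i, (X - C ((hA.eigenvalues i : ℂ))) := by
  have hV1 : (hA.eigenvectorUnitary : Matrix n n ℂ) * (hA.eigenvectorUnitary : Matrix n n ℂ)ᴴ = 1 := by
    rw [← Matrix.star_eq_conjTranspose]
    exact Matrix.mem_unitaryGroup_iff.mp hA.eigenvectorUnitary.2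
  have hV2 : (hA.eigenvectorUnitary : Matrix n n ℂ)ᴴ * (hA.eigenvectorUnitary : Matrix n n ℂ) = 1 := by
    rw [← Matrix.star_eq_conjTranspose]
    exact Matrix.mem_unitaryGroup_iff'.mp hA.eigenvectorUnitary.2
  have hdiag : (Matrix.diagonal (RCLike.ofReal ∘ hA.eigenvalues) : Matrix n n ℂ).charpoly
      = ∏ i, (X - C ((hA.eigenvalues i : ℂ))) := by
    have : charmatrix (Matrix.diagonal (RCLike.ofReal ∘ hA.eigenvalues) : Matrix n n ℂ)
        = Matrix.diagonal (fun i => X - C ((hA.eigenvalues i : ℂ))) := by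
      ext i j
      by_cases h : i = j
      · subst h; rw [charmatrix_apply_eq, Matrix.diagonal_apply_eq]; simp
      · rw [charmatrix_apply_ne _ _ _ h, Matrix.diagonal_apply_ne _ h,
          Matrix.diagonal_apply_ne _ h]; simp
    rw [Matrix.charpoly, this, Matrix.det_diagonal]
  calc A.charpoly
      = ((hA.eigenvectorUnitary : Matrix n n ℂ) *
          Matrix.diagonal (RCLike.ofReal ∘ hA.eigenvalues) *
          (hA.eigenvectorUnitary : Matrix n n ℂ)ᴴ).charpoly := by
        conv_lhs => rw [hA.spectral_theorem]
        rw [Unitary.conjStarAlgAut_apply, Matrix.star_eq_conjTranspose]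
    _ = _ := by rw [charpoly_unitary_conj' _ _ hV1 hV2, hdiag]

open Polynomial in
/-- Hermitian matrices with equal characteristic polynomials have the same eigenvalue
statistics. -/
lemma sum_f_eigenvalues_eq' {n : Type*} [Fintype n] [DecidableEq n]
    {A B : Matrix n n ℂ} (hA : A.IsHermitian) (hB : B.IsHermitian)
    (h : A.charpoly = B.charpoly) (f : ℝ → ℝ) :
    ∑ i, f (hA.eigenvalues i) = ∑ i, f (hB.eigenvalues i) := by
  have hmult : (Finset.univ.val.map fun i => ((hA.eigenvalues i : ℂ)))
      = (Finset.univ.val.map fun i => ((hB.eigenvalues i : ℂ))) := by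
    have hA' := charpoly_hermitian' A hA
    have hB' := charpoly_hermitian' B hB
    have hr := congrArg Polynomial.roots ((hA'.symm.trans h).trans hB')
    rwa [show (∏ i, (X - C ((hA.eigenvalues i : ℂ))))
        = ((Finset.univ.val.map fun i => ((hA.eigenvalues i : ℂ))).map fun a => X - C a).prod by
          rw [Multiset.map_map]; rfl,
      show (∏ i, (X - C ((hB.eigenvalues i : ℂ))))
        = ((Finset.univ.val.map fun i => ((hB.eigenvalues i : ℂ))).map fun a => X - C a).prod by
          rw [Multiset.map_map]; rfl,
      Polynomial.roots_multiset_prod_X_sub_C, Polynomial.roots_multiset_prod_X_sub_C] at hr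
  have key : ∀ (g : n → ℝ), (∑ i, f (g i))
      = ((Finset.univ.val.map fun i => ((g i : ℂ))).map fun z => f z.re).sum := by
    intro g
    rw [Multiset.map_map]
    simp only [Function.comp_def, Complex.ofReal_re]
    rfl
  rw [key hA.eigenvalues, key hB.eigenvalues, hmult]

lemma isHermitian_unitary_conj' {n : Type*} [Fintype n] [DecidableEq n]
    {M : Matrix n n ℂ} (V : Matrix n n ℂ) (hM : M.IsHermitian) :
    (V * M * Vᴴ).IsHermitian := by
  unfold Matrix.IsHermitian at *
  rw [conjTranspose_mul, conjTranspose_mul, conjTranspose_conjTranspose, hM, Matrix.mul_assoc]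

/-- The von Neumann entropy is invariant under unitary conjugation. -/
lemma vnEntropy_unitary_conj' {n : Type*} [Fintype n] [DecidableEq n]
    (V M : Matrix n n ℂ) (hM : M.IsHermitian) (h1 : V * Vᴴ = 1) (h2 : Vᴴ * V = 1) :
    vnEntropy (V * M * Vᴴ) = vnEntropy M := by
  have hM' := isHermitian_unitary_conj' V hM
  rw [vnEntropy, vnEntropy, dif_pos hM', dif_pos hM]
  congr 1
  exact sum_f_eigenvalues_eq' hM' hM (charpoly_unitary_conj' V M h1 h2)
    (fun x => x * Real.logb 2 x)

lemma kron_conjTranspose' {A B : Type*} [Fintype A] [DecidableEq A] [Fintype B] [DecidableEq B]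
    (M : Matrix A A ℂ) (N : Matrix B B ℂ) : (M ⊗ₖ N)ᴴ = Mᴴ ⊗ₖ Nᴴ := by
  ext ⟨a, b⟩ ⟨c, d⟩
  simp [Matrix.conjTranspose_apply, Matrix.kroneckerMap_apply]

lemma stdBasis_cc_conjTranspose' {A : Type*} [DecidableEq A] (c : A) :
    (Matrix.single c c (1 : ℂ))ᴴ = Matrix.single c c (1 : ℂ) := by
  ext i j
  simp [Matrix.conjTranspose_apply, Matrix.single, and_comm]

lemma sum_stdBasis_kron_one' {A B : Type*} [Fintype A] [DecidableEq A] [Fintype B] [DecidableEq B] :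
    (∑ c : A, Matrix.single c c (1 : ℂ) ⊗ₖ (1 : Matrix B B ℂ)) = 1 := by
  ext ⟨a, b⟩ ⟨a', b'⟩
  simp [Matrix.sum_apply, Matrix.kroneckerMap_apply, Matrix.single, Matrix.one_apply,
    Prod.ext_iff, ite_and]
  split <;> split <;> simp_all

lemma ctrl_mul_left' {A B : Type*} [Fintype A] [DecidableEq A] [Fintype B] [DecidableEq B]
    (c : A) (N : Matrix B B ℂ) (f : A → Matrix B B ℂ) :
    (Matrix.single c c (1 : ℂ) ⊗ₖ N) * (∑ d, Matrix.single d d (1 : ℂ) ⊗ₖ f d)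
      = Matrix.single c c (1 : ℂ) ⊗ₖ (N * f c) := by
  rw [Finset.mul_sum, Finset.sum_eq_single c]
  · rw [← Matrix.mul_kronecker_mul, Matrix.single_mul_single_same, one_mul]
  · intro d _ hd
    rw [← Matrix.mul_kronecker_mul, Matrix.single_mul_single_of_ne (h := Ne.symm hd),
      Matrix.zero_kronecker]
  · intro h; exact absurd (Finset.mem_univ c) h

lemma ctrl_mul_right' {A B : Type*} [Fintype A] [DecidableEq A] [Fintype B] [DecidableEq B]
    (c : A) (N : Matrix B B ℂ) (f : A → Matrix B B ℂ) :
    (∑ d, Matrix.single d d (1 : ℂ) ⊗ₖ f d) * (Matrix.single c c (1 : ℂ) ⊗ₖ N)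
      = Matrix.single c c (1 : ℂ) ⊗ₖ (f c * N) := by
  rw [Finset.sum_mul, Finset.sum_eq_single c]
  · rw [← Matrix.mul_kronecker_mul, Matrix.single_mul_single_same, one_mul]
  · intro d _ hd
    rw [← Matrix.mul_kronecker_mul, Matrix.single_mul_single_of_ne (h := hd),
      Matrix.zero_kronecker]
  · intro h; exact absurd (Finset.mem_univ c) h

/-- **Invariance of `Δ_Z` under controlled unitaries.** If
`U = ∑ c |c⟩⟨c| ⊗ U_c` is a controlled unitary (each `U_c` unitary), then for every
density matrix `ρ` on `ℂ^{d_A} ⊗ ℂ^{d_B}`, `Δ_Z(U ρ U†) = Δ_Z(ρ)`. -/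
theorem DeltaZ_ctrlUnitary_invariant (dA dB : ℕ)
    (U : Fin dA → Matrix (Fin dB) (Fin dB) ℂ)
    (hU : ∀ c, U c * (U c)ᴴ = 1 ∧ (U c)ᴴ * U c = 1)
    (ρ : Matrix (Fin dA × Fin dB) (Fin dA × Fin dB) ℂ) (hρ : IsDensity ρ) :
    DeltaZ ((∑ c, Matrix.single c c (1 : ℂ) ⊗ₖ U c) * ρ *
      (∑ c, Matrix.single c c (1 : ℂ) ⊗ₖ U c)ᴴ) = DeltaZ ρ := by
  set Utot := ∑ c, Matrix.single c c (1 : ℂ) ⊗ₖ U c with hUtot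
  have hUct : Utotᴴ = ∑ c, Matrix.single c c (1 : ℂ) ⊗ₖ (U c)ᴴ := by
    rw [hUtot, Matrix.conjTranspose_sum]
    refine Finset.sum_congr rfl fun c _ => ?_
    rw [kron_conjTranspose', stdBasis_cc_conjTranspose']
  have h1 : Utot * Utotᴴ = 1 := by
    rw [hUct, hUtot, Finset.sum_mul]
    have hterm : ∀ c : Fin dA, (Matrix.single c c (1 : ℂ) ⊗ₖ U c) *
        (∑ d, Matrix.single d d (1 : ℂ) ⊗ₖ (U d)ᴴ)
        = Matrix.single c c (1 : ℂ) ⊗ₖ (1 : Matrix (Fin dB) (Fin dB) ℂ) := fun c => by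
      rw [ctrl_mul_left', (hU c).1]
    rw [Finset.sum_congr rfl (fun c _ => hterm c), sum_stdBasis_kron_one']
  have h2 : Utotᴴ * Utot = 1 := by
    rw [hUct, hUtot, Finset.sum_mul]
    have hterm : ∀ c : Fin dA, (Matrix.single c c (1 : ℂ) ⊗ₖ (U c)ᴴ) *
        (∑ d, Matrix.single d d (1 : ℂ) ⊗ₖ U d)
        = Matrix.single c c (1 : ℂ) ⊗ₖ (1 : Matrix (Fin dB) (Fin dB) ℂ) := fun c => by
      rw [ctrl_mul_left', (hU c).2]
    rw [Finset.sum_congr rfl (fun c _ => hterm c), sum_stdBasis_kron_one']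
  have hρH : ρ.IsHermitian := hρ.1.1
  have hdephH : (dephA ρ).IsHermitian := by
    rw [dephA, Matrix.IsHermitian, Matrix.conjTranspose_sum]
    refine Finset.sum_congr rfl fun c _ => ?_
    rw [Matrix.conjTranspose_mul, Matrix.conjTranspose_mul, kron_conjTranspose',
      stdBasis_cc_conjTranspose', Matrix.conjTranspose_one, hρH.eq, Matrix.mul_assoc]
  have hdeph : dephA (Utot * ρ * Utotᴴ) = Utot * dephA ρ * Utotᴴ := by
    rw [dephA, dephA]
    conv_rhs => rw [Finset.mul_sum, Finset.sum_mul]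
    refine Finset.sum_congr rfl fun c _ => ?_
    have e1 : (Matrix.single c c (1 : ℂ) ⊗ₖ (1 : Matrix (Fin dB) (Fin dB) ℂ)) * Utot
        = Matrix.single c c (1 : ℂ) ⊗ₖ U c := by
      rw [hUtot, ctrl_mul_left', one_mul]
    have e2 : Utotᴴ * (Matrix.single c c (1 : ℂ) ⊗ₖ (1 : Matrix (Fin dB) (Fin dB) ℂ))
        = Matrix.single c c (1 : ℂ) ⊗ₖ (U c)ᴴ := by
      rw [hUct, ctrl_mul_right', mul_one]
    have e3 : Utot * (Matrix.single c c (1 : ℂ) ⊗ₖ (1 : Matrix (Fin dB) (Fin dB) ℂ))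
        = Matrix.single c c (1 : ℂ) ⊗ₖ U c := by
      rw [hUtot, ctrl_mul_right', mul_one]
    have e4 : (Matrix.single c c (1 : ℂ) ⊗ₖ (1 : Matrix (Fin dB) (Fin dB) ℂ)) * Utotᴴ
        = Matrix.single c c (1 : ℂ) ⊗ₖ (U c)ᴴ := by
      rw [hUct, ctrl_mul_left', one_mul]
    calc (Matrix.single c c (1 : ℂ) ⊗ₖ (1 : Matrix (Fin dB) (Fin dB) ℂ)) *
          (Utot * ρ * Utotᴴ) *
          (Matrix.single c c (1 : ℂ) ⊗ₖ (1 : Matrix (Fin dB) (Fin dB) ℂ))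
        = ((Matrix.single c c (1 : ℂ) ⊗ₖ (1 : Matrix (Fin dB) (Fin dB) ℂ)) * Utot) * ρ *
          (Utotᴴ * (Matrix.single c c (1 : ℂ) ⊗ₖ (1 : Matrix (Fin dB) (Fin dB) ℂ))) := by
          simp only [Matrix.mul_assoc]
      _ = (Utot * (Matrix.single c c (1 : ℂ) ⊗ₖ (1 : Matrix (Fin dB) (Fin dB) ℂ))) * ρ *
          ((Matrix.single c c (1 : ℂ) ⊗ₖ (1 : Matrix (Fin dB) (Fin dB) ℂ)) * Utotᴴ) := by
          rw [e1, e2, e3, e4]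
      _ = Utot * ((Matrix.single c c (1 : ℂ) ⊗ₖ (1 : Matrix (Fin dB) (Fin dB) ℂ)) * ρ *
          (Matrix.single c c (1 : ℂ) ⊗ₖ (1 : Matrix (Fin dB) (Fin dB) ℂ))) * Utotᴴ := by
          simp only [Matrix.mul_assoc]
  rw [DeltaZ, DeltaZ, hdeph, vnEntropy_unitary_conj' Utot ρ hρH h1 h2,
    vnEntropy_unitary_conj' Utot (dephA ρ) hdephH h1 h2]
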